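/- Let Zo = Σ_{i=1}^k [−g^i, g^i] be the zonotope (Minkowski sum of centered segments) generated by vectors g^1, …, g^k ∈ ℝ^m, and let e^1, …, e^k be the orthonormal basis from Gram–Schmidt orthogonalization of g^1, …, g^k (assumed linearly independent). Let ξ be an isotropic centered Gaussian vector on span(g^1,…,g^k). Then P(ξ ∈ Zo) ≤ P(ξ ∈ R), where R = Σ_{i=1}^k [−⟨e^i, g^i⟩ e^i, ⟨e^i, g^i⟩ e^i] is the hyper-rectangle with edges along the e^i of half-lengths ⟨e^i, g^i⟩. -/

import Mathlib

open MeasureTheory ProbabilityTheory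

/-- Gram–Schmidt orthonormalization of a family of vectors of `ℝ^m`. -/
noncomputable def gramSchmidtONB {k m : ℕ} (g : Fin k → EuclideanSpace ℝ (Fin m)) :
    Fin k → EuclideanSpace ℝ (Fin m) :=
  @InnerProductSpace.gramSchmidtNormed ℝ _ _ _ _ (Fin k) _ _ Finite.to_wellFoundedLT g

open Set Real

namespace ZonotopeAux

variable {σ : NNReal}

lemma pdf_anti {v : NNReal} {x y : ℝ} (h : |x| ≤ |y|) :
    gaussianPDFReal 0 v y ≤ gaussianPDFReal 0 v x := by
  unfold gaussianPDFReal
  refine mul_le_mul_of_nonneg_left ?_ (by positivity)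
  refine Real.exp_le_exp.2 ?_
  rw [sub_zero, sub_zero, neg_div, neg_div, neg_le_neg_iff]
  rcases eq_or_ne v 0 with hv | hv
  · simp [hv]
  · have h2 : x ^ 2 ≤ y ^ 2 := by
      rw [← sq_abs x, ← sq_abs y]
      exact pow_le_pow_left₀ (abs_nonneg _) h 2
    have hv' : (0:ℝ) < 2 * v := by
      have : (0:ℝ) < (v:ℝ) := by positivity
      linarith
    exact div_le_div_of_nonneg_right h2 hv'.le |>.trans_eq rfl

lemma gauss_singleton (hσ : σ ≠ 0) (x : ℝ) : gaussianReal 0 (σ^2) {x} = 0 := by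
  have hv : (σ^2 : NNReal) ≠ 0 := pow_ne_zero _ hσ
  exact gaussianReal_absolutelyContinuous 0 hv Real.volume_singleton

lemma gauss_shift (hσ : σ ≠ 0) {l u a : ℝ} (h : ∀ x ∈ Icc l u, |x| ≤ |x + a|) :
    gaussianReal 0 (σ^2) (Icc (l + a) (u + a)) ≤ gaussianReal 0 (σ^2) (Icc l u) := by
  have hv : (σ^2 : NNReal) ≠ 0 := pow_ne_zero _ hσ
  rw [gaussianReal_apply _ hv, gaussianReal_apply _ hv]
  have himg : Icc (l + a) (u + a) = (· + a) '' Icc l u := by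
    rw [image_add_const_Icc]
  rw [himg, ← MeasurePreserving.setLIntegral_comp_emb (measurePreserving_add_right volume a)
    (measurableEmbedding_addRight a) (gaussianPDF 0 (σ^2)) (Icc l u)]
  refine setLIntegral_mono (measurable_gaussianPDF 0 (σ^2)) fun x hx => ?_
  exact ENNReal.ofReal_le_ofReal (pdf_anti (h x hx))

lemma gauss_neg (hσ : σ ≠ 0) (s : Set ℝ) (hs : MeasurableSet s) :
    gaussianReal 0 (σ^2) ((fun x : ℝ => -x) ⁻¹' s) = gaussianReal 0 (σ^2) s := by
  have h1 : ∀ h, NNReal.mk ((-1:ℝ)^2) h = 1 := fun _ => by ext; norm_num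
  have hmap := gaussianReal_map_const_mul (μ := 0) (v := σ^2) (-1)
  rw [mul_zero, h1, one_mul] at hmap
  have : gaussianReal 0 (σ^2) s = (gaussianReal 0 (σ^2)).map ((-1 : ℝ) * ·) s := by rw [hmap]
  rw [this, Measure.map_apply (by fun_prop) hs]
  congr 1
  ext x
  simp

lemma gauss_Icc_le_aux (hσ : σ ≠ 0) {a : ℝ} (r : ℝ) (ha : 0 ≤ a) :
    gaussianReal 0 (σ^2) (Icc (a - r) (a + r)) ≤ gaussianReal 0 (σ^2) (Icc (-r) r) := by
  rcases lt_or_ge r 0 with hr | hr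
  · rw [Icc_eq_empty (by intro h; linarith)]
    simp
  rcases le_or_gt (2 * r) a with h2r | h2r
  · -- far case : pointwise comparison
    have : Icc (a - r) (a + r) = Icc (-r + a) (r + a) := by ring_nf
    rw [this]
    refine gauss_shift hσ fun x hx => ?_
    refine abs_le_abs (by linarith) (by rw [mem_Icc] at hx; linarith [hx.1])
  · -- overlapping case
    set γ := gaussianReal 0 (σ^2) with hγ
    have h1 : γ (Icc (a - r) (a + r)) ≤ γ (Icc (a - r) r) + γ (Ioc r (a + r)) := by
      rw [← Icc_union_Ioc_eq_Icc (by linarith) (by linarith)]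
      exact measure_union_le _ _
    have h2 : γ (Icc (-r) (a - r)) + γ (Ioc (a - r) r) = γ (Icc (-r) r) := by
      have key : Icc (-r) (a - r) ∪ Ioc (a - r) r = Icc (-r) r :=
        Icc_union_Ioc_eq_Icc (by linarith) (by linarith)
      rw [← key]
      refine (measure_union ?_ measurableSet_Ioc).symm
      exact Set.disjoint_left.2 fun x hx1 hx2 => absurd hx1.2 (not_le.2 hx2.1)
    have h3 : γ (Icc (a - r) r) ≤ γ (Ioc (a - r) r) := by
      have hsub : Icc (a - r) r ⊆ Ioc (a - r) r ∪ {a - r} := by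
        intro x hx
        rcases eq_or_lt_of_le hx.1 with h | h
        · exact Or.inr (by simp [h.symm])
        · exact Or.inl ⟨h, hx.2⟩
      calc γ (Icc (a - r) r) ≤ γ (Ioc (a - r) r) + γ {a - r} :=
            le_trans (measure_mono hsub) (measure_union_le _ _)
        _ = γ (Ioc (a - r) r) := by rw [gauss_singleton hσ, add_zero]
    have h4 : γ (Ioc r (a + r)) ≤ γ (Icc (-r) (a - r)) := by
      have e1 : Icc (r - a + a) (r + a) = Icc r (a + r) := by ring_nf
      have e2 : (fun x : ℝ => -x) ⁻¹' Icc (-r) (a - r) = Icc (r - a) r := by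
        ext x
        simp only [mem_preimage, mem_Icc]
        constructor <;> intro h <;> constructor <;> linarith [h.1, h.2]
      calc γ (Ioc r (a + r)) ≤ γ (Icc r (a + r)) := measure_mono Ioc_subset_Icc_self
        _ = γ (Icc (r - a + a) (r + a)) := by rw [e1]
        _ ≤ γ (Icc (r - a) r) := by
            refine gauss_shift hσ fun x hx => ?_
            rw [mem_Icc] at hx
            exact abs_le_abs (by linarith) (by linarith [hx.1])
        _ = γ (Icc (-r) (a - r)) := by rw [← e2, gauss_neg hσ _ measurableSet_Icc]
    calc γ (Icc (a - r) (a + r)) ≤ γ (Icc (a - r) r) + γ (Ioc r (a + r)) := h1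
      _ ≤ γ (Ioc (a - r) r) + γ (Icc (-r) (a - r)) := add_le_add h3 h4
      _ = γ (Icc (-r) (a - r)) + γ (Ioc (a - r) r) := by rw [add_comm]
      _ = γ (Icc (-r) r) := h2

lemma gauss_Icc_le (hσ : σ ≠ 0) (a r : ℝ) :
    gaussianReal 0 (σ^2) (Icc (a - r) (a + r)) ≤ gaussianReal 0 (σ^2) (Icc (-r) r) := by
  rcases le_or_gt 0 a with ha | ha
  · exact gauss_Icc_le_aux hσ r ha
  · have e : Icc (a - r) (a + r) = (fun x : ℝ => -x) ⁻¹' Icc (-a - r) (-a + r) := by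
      ext x
      simp only [mem_preimage, mem_Icc]
      constructor <;> intro h <;> constructor <;> linarith [h.1, h.2]
    rw [e, gauss_neg hσ _ measurableSet_Icc]
    exact gauss_Icc_le_aux hσ r (by linarith)
lemma zonotope_set_measurable {n : ℕ} (c : Fin n → Fin n → ℝ) (b v : Fin n → ℝ) :
    MeasurableSet {z : Fin n → ℝ |
      ∃ t : Fin n → ℝ, (∀ i, |t i| ≤ b i) ∧ ∀ j, z j = v j + ∑ i, t i * c j i} := by
  have himg : {z : Fin n → ℝ |
      ∃ t : Fin n → ℝ, (∀ i, |t i| ≤ b i) ∧ ∀ j, z j = v j + ∑ i, t i * c j i} =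
      (fun (t : Fin n → ℝ) (j : Fin n) => v j + ∑ i, t i * c j i) ''
        (Set.pi univ fun i => Icc (-b i) (b i)) := by
    ext z
    simp only [mem_setOf_eq, mem_image, Set.mem_pi, mem_univ, forall_true_left, mem_Icc]
    constructor
    · rintro ⟨t, ht, hz⟩
      exact ⟨t, fun i => abs_le.1 (ht i), funext fun j => (hz j).symm⟩
    · rintro ⟨t, ht, hz⟩
      exact ⟨t, fun i => abs_le.2 (ht i), fun j => (congrFun hz j).symm⟩
  rw [himg]
  have hcont : Continuous (fun (t : Fin n → ℝ) (j : Fin n) => v j + ∑ i, t i * c j i) := by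
    refine continuous_pi fun j => continuous_const.add ?_
    exact continuous_finset_sum _ fun i _ => (continuous_apply i).mul continuous_const
  exact (((isCompact_univ_pi fun i => isCompact_Icc).image hcont).isClosed).measurableSet

lemma core_ineq (hσ : σ ≠ 0) :
    ∀ (n : ℕ) (c : Fin n → Fin n → ℝ), (∀ i, 0 < c i i) →
      (∀ j i : Fin n, i < j → c j i = 0) → ∀ v : Fin n → ℝ,
      (Measure.pi fun _ : Fin n => gaussianReal 0 (σ^2))
          {z | ∃ t : Fin n → ℝ, (∀ i, |t i| ≤ 1) ∧ ∀ j, z j = v j + ∑ i, t i * c j i}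
        ≤ ∏ i, gaussianReal 0 (σ^2) (Icc (-(c i i)) (c i i)) := by
  intro n
  induction n with
  | zero =>
    intro c _ _ v
    simp only [Finset.univ_eq_empty, Finset.prod_empty]
    exact prob_le_one
  | succ n ih =>
    intro c hdiag htri v
    set γ := gaussianReal 0 (σ^2) with hγdef
    set S : Set (Fin (n + 1) → ℝ) :=
      {z | ∃ t : Fin (n + 1) → ℝ, (∀ i, |t i| ≤ 1) ∧ ∀ j, z j = v j + ∑ i, t i * c j i}
      with hSdef
    have hS : MeasurableSet S := zonotope_set_measurable c (fun _ => 1) v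
    set L : Fin (n + 1) := Fin.last n with hLdef
    have hr : 0 < c L L := hdiag L
    set B : ENNReal :=
      ∏ i : Fin n, γ (Icc (-(c i.castSucc i.castSucc)) (c i.castSucc i.castSucc)) with hBdef
    -- key facts about membership of `snoc`
    have hsumL : ∀ (t : Fin (n + 1) → ℝ), ∑ i, t i * c L i = t L * c L L := by
      intro t
      refine Finset.sum_eq_single L (fun i _ hi => ?_) (fun h' => absurd (Finset.mem_univ L) h')
      rw [htri L i ((Fin.le_last i).lt_of_ne hi), mul_zero]
    -- the slice bound
    have key : ∀ x : ℝ,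
        (Measure.pi fun _ : Fin n => γ) {w : Fin n → ℝ | Fin.snoc w x ∈ S}
          ≤ (Icc (v L - c L L) (v L + c L L)).indicator (fun _ => B) x := by
      intro x
      by_cases hx : x ∈ Icc (v L - c L L) (v L + c L L)
      · rw [indicator_of_mem hx]
        refine le_trans (measure_mono ?_)
          (ih (fun j i => c j.castSucc i.castSucc) (fun i => hdiag i.castSucc)
            (fun j i hij => htri j.castSucc i.castSucc (Fin.castSucc_lt_castSucc_iff.2 hij))
            (fun j => v j.castSucc + ((x - v L) / c L L) * c j.castSucc L))
        rintro w ⟨t, ht1, ht2⟩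
        have hL : x = v L + t L * c L L := by
          have h := ht2 L
          rwa [Fin.snoc_last, hsumL t] at h
        have htL : t L = (x - v L) / c L L := by
          rw [eq_div_iff hr.ne']
          linarith [hL]
        refine ⟨fun i => t i.castSucc, fun i => ht1 _, fun j => ?_⟩
        have h := ht2 j.castSucc
        rw [Fin.snoc_castSucc] at h
        rw [h, Fin.sum_univ_castSucc, ← htL]
        ring
      · rw [indicator_of_notMem hx]
        have hempty : {w : Fin n → ℝ | Fin.snoc w x ∈ S} = ∅ := by
          rw [eq_empty_iff_forall_notMem]
          rintro w ⟨t, ht1, ht2⟩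
          have hL : x = v L + t L * c L L := by
            have h := ht2 L
            rwa [Fin.snoc_last, hsumL t] at h
          refine hx ?_
          have habs : |t L * c L L| ≤ c L L := by
            rw [abs_mul, abs_of_pos hr]
            exact mul_le_of_le_one_left hr.le (ht1 L)
          obtain ⟨hb1, hb2⟩ := abs_le.1 habs
          exact mem_Icc.2 ⟨by linarith, by linarith⟩
        rw [hempty]
        simp
    -- Fubini via the measurable equivalence splitting off the last coordinate
    have hmp := measurePreserving_piFinSuccAbove (fun _ : Fin (n + 1) => γ) L
    set φ := MeasurableEquiv.piFinSuccAbove (fun _ : Fin (n + 1) => ℝ) L with hφdef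
    have hpre : (Measure.pi fun _ : Fin (n + 1) => γ) S
        = (γ.prod (Measure.pi fun _ : Fin n => γ)) (φ.symm ⁻¹' S) :=
      ((hmp.symm _).measure_preimage hS.nullMeasurableSet).symm
    have hsnoc : ∀ (x : ℝ) (w : Fin n → ℝ), φ.symm (x, w) = Fin.snoc w x := by
      intro x w
      show (Fin.insertNthEquiv (fun _ => ℝ) L) (x, w) = Fin.snoc w x
      rw [hLdef, Fin.insertNthEquiv_last]
      rfl
    have hprod : (γ.prod (Measure.pi fun _ : Fin n => γ)) (φ.symm ⁻¹' S)
        = ∫⁻ x, (Measure.pi fun _ : Fin n => γ) {w : Fin n → ℝ | Fin.snoc w x ∈ S} ∂γ := by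
      rw [Measure.prod_apply (φ.symm.measurable hS)]
      congr 1
      ext x
      congr 1
      ext w
      simp only [mem_preimage, mem_setOf_eq, hsnoc]
    calc (Measure.pi fun _ : Fin (n + 1) => γ) S
        = ∫⁻ x, (Measure.pi fun _ : Fin n => γ) {w : Fin n → ℝ | Fin.snoc w x ∈ S} ∂γ := by
          rw [hpre, hprod]
      _ ≤ ∫⁻ x, (Icc (v L - c L L) (v L + c L L)).indicator (fun _ => B) x ∂γ :=
          lintegral_mono key
      _ = B * γ (Icc (v L - c L L) (v L + c L L)) :=
          lintegral_indicator_const measurableSet_Icc _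
      _ ≤ B * γ (Icc (-(c L L)) (c L L)) :=
          mul_le_mul_right (gauss_Icc_le hσ (v L) (c L L)) _
      _ = ∏ i : Fin (n + 1), γ (Icc (-(c i i)) (c i i)) := by
          rw [Fin.prod_univ_castSucc]
section GS

variable {F : Type*} [NormedAddCommGroup F] [InnerProductSpace ℝ F]

lemma inner_eq_zero_of_mem_span {u : F} {s : Set F} (h : ∀ y ∈ s, (inner ℝ u y : ℝ) = 0)
    {x : F} (hx : x ∈ Submodule.span ℝ s) : (inner ℝ u x : ℝ) = 0 := by
  induction hx using Submodule.span_induction with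
  | mem y hy => exact h y hy
  | zero => exact inner_zero_right u
  | add a b _ _ ha hb => rw [inner_add_right, ha, hb, add_zero]
  | smul r a _ ha => rw [real_inner_smul_right, ha, mul_zero]

lemma zonotope_image_set_measurable {k : ℕ} {E : Type*} [NormedAddCommGroup E]
    [NormedSpace ℝ E] [MeasurableSpace E] [OpensMeasurableSpace E] [T2Space E]
    (g : Fin k → E) (b : Fin k → ℝ) :
    MeasurableSet {x : E | ∃ t : Fin k → ℝ, (∀ i, |t i| ≤ b i) ∧ x = ∑ i, t i • g i} := by
  have himg : {x : E | ∃ t : Fin k → ℝ, (∀ i, |t i| ≤ b i) ∧ x = ∑ i, t i • g i} =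
      (fun t : Fin k → ℝ => ∑ i, t i • g i) '' (Set.pi univ fun i => Icc (-b i) (b i)) := by
    ext x
    simp only [mem_setOf_eq, mem_image, Set.mem_pi, mem_univ, forall_true_left, mem_Icc]
    constructor
    · rintro ⟨t, ht, hz⟩
      exact ⟨t, fun i => abs_le.1 (ht i), hz.symm⟩
    · rintro ⟨t, ht, hz⟩
      exact ⟨t, fun i => abs_le.2 (ht i), hz.symm⟩
  rw [himg]
  have hcont : Continuous (fun t : Fin k → ℝ => ∑ i, t i • g i) :=
    continuous_finset_sum _ fun i _ => (continuous_apply i).smul continuous_const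
  exact (((isCompact_univ_pi fun i => isCompact_Icc).image hcont).isClosed).measurableSet

end GS

/-- Unnormalized Gram-Schmidt with the same pinned instance. -/
noncomputable def GSo {k m : ℕ} (g : Fin k → EuclideanSpace ℝ (Fin m)) :
    Fin k → EuclideanSpace ℝ (Fin m) :=
  @InnerProductSpace.gramSchmidt ℝ _ _ _ _ (Fin k) _ _ Finite.to_wellFoundedLT g

section GSfacts

variable {k m : ℕ} (g : Fin k → EuclideanSpace ℝ (Fin m))

lemma gramSchmidtONB_eq_smul (i : Fin k) :
    gramSchmidtONB g i = (‖GSo g i‖ : ℝ)⁻¹ • GSo g i := rfl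

lemma GSo_orthogonal {a b : Fin k} (h : a ≠ b) : (inner ℝ (GSo g a) (GSo g b) : ℝ) = 0 :=
  @InnerProductSpace.gramSchmidt_orthogonal ℝ _ _ _ _ (Fin k) _ _ Finite.to_wellFoundedLT g a b h

lemma GSo_ne_zero (hg : LinearIndependent ℝ g) (i : Fin k) : GSo g i ≠ 0 :=
  @InnerProductSpace.gramSchmidt_ne_zero ℝ _ _ _ _ (Fin k) _ _ Finite.to_wellFoundedLT g i hg

lemma gramSchmidtONB_orthonormal (hg : LinearIndependent ℝ g) :
    Orthonormal ℝ (gramSchmidtONB g) :=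
  @InnerProductSpace.gramSchmidtNormed_orthonormal ℝ _ _ _ _ (Fin k) _ _ Finite.to_wellFoundedLT g hg

lemma mem_span_GSo (i : Fin k) :
    g i ∈ Submodule.span ℝ (GSo g '' Set.Iic i) :=
  @InnerProductSpace.mem_span_gramSchmidt ℝ _ _ _ _ (Fin k) _ _ Finite.to_wellFoundedLT g i i le_rfl

lemma GSo_def'' (i : Fin k) :
    g i = GSo g i + ∑ l ∈ Finset.Iio i,
      ((inner ℝ (GSo g l) (g i) : ℝ) / (‖GSo g l‖ : ℝ) ^ 2) • GSo g l :=
  @InnerProductSpace.gramSchmidt_def'' ℝ _ _ _ _ (Fin k) _ _ Finite.to_wellFoundedLT g i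

lemma inner_gramSchmidtONB_GSo_eq_zero {j l : Fin k} (h : j ≠ l) :
    (inner ℝ (gramSchmidtONB g j) (GSo g l) : ℝ) = 0 := by
  rw [gramSchmidtONB_eq_smul, real_inner_smul_left, GSo_orthogonal g h, mul_zero]

lemma gramSchmidtONB_tri (hg : LinearIndependent ℝ g) {j i : Fin k} (hij : i < j) :
    (inner ℝ (gramSchmidtONB g j) (g i) : ℝ) = 0 := by
  refine inner_eq_zero_of_mem_span ?_ (mem_span_GSo g i)
  rintro y ⟨l, hl, rfl⟩
  exact inner_gramSchmidtONB_GSo_eq_zero g (hl.trans_lt hij).ne'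

lemma gramSchmidtONB_diag_pos (hg : LinearIndependent ℝ g) (i : Fin k) :
    0 < (inner ℝ (gramSchmidtONB g i) (g i) : ℝ) := by
  have hu0 : GSo g i ≠ 0 := GSo_ne_zero g hg i
  have hmem : g i - GSo g i ∈ Submodule.span ℝ (GSo g '' Set.Iio i) := by
    nth_rewrite 1 [GSo_def'' g i]
    rw [add_sub_cancel_left]
    exact Submodule.sum_mem _ fun l hl => Submodule.smul_mem _ _
      (Submodule.subset_span ⟨l, Finset.mem_Iio.1 hl, rfl⟩)
  have hperp : (inner ℝ (gramSchmidtONB g i) (g i - GSo g i) : ℝ) = 0 := by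
    refine inner_eq_zero_of_mem_span ?_ hmem
    rintro y ⟨l, hl, rfl⟩
    exact inner_gramSchmidtONB_GSo_eq_zero g (Set.mem_Iio.1 hl).ne'
  have hself : (inner ℝ (gramSchmidtONB g i) (GSo g i) : ℝ) = ‖GSo g i‖ := by
    rw [gramSchmidtONB_eq_smul, real_inner_smul_left, real_inner_self_eq_norm_sq, sq,
      ← mul_assoc, inv_mul_cancel₀ (norm_ne_zero_iff.2 hu0), one_mul]
  have hval : (inner ℝ (gramSchmidtONB g i) (g i) : ℝ) = ‖GSo g i‖ := by
    have hdec : g i = GSo g i + (g i - GSo g i) := by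
      rw [add_comm, sub_add_cancel]
    nth_rewrite 1 [hdec]
    rw [inner_add_right, hperp, add_zero, hself]
  rw [hval]
  exact norm_pos_iff.2 hu0

end GSfacts

end ZonotopeAux

open ZonotopeAux Set in
/-- Comparison between the zonotope `Zo = Σ [−gⁱ, gⁱ]` and the hyper-rectangle
`R = Σ [−⟨eⁱ,gⁱ⟩eⁱ, ⟨eⁱ,gⁱ⟩eⁱ]` built on the Gram–Schmidt orthonormalization
`e` of `g`: an isotropic centered Gaussian vector on the span of the `gⁱ`
(realized as the image of a standard product Gaussian through
`z ↦ ∑ zᵢ • eᵢ`, each coordinate being `N(0,σ²)`) lies in `Zo` with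
probability at most that of `R`. -/
theorem zonotope_prob_le_rectangle_prob (m k : ℕ) (hk : k ≤ m)
    (g : Fin k → EuclideanSpace ℝ (Fin m)) (hg : LinearIndependent ℝ g)
    (σ : NNReal) (hσ : σ ≠ 0) :
    ((Measure.pi fun _ : Fin k => gaussianReal 0 (σ ^ 2)).map
        (fun z : Fin k → ℝ => ∑ i, z i • gramSchmidtONB g i))
        {x | ∃ t : Fin k → ℝ, (∀ i, |t i| ≤ 1) ∧ x = ∑ i, t i • g i} ≤
      ((Measure.pi fun _ : Fin k => gaussianReal 0 (σ ^ 2)).map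
        (fun z : Fin k → ℝ => ∑ i, z i • gramSchmidtONB g i))
        {x | ∃ t : Fin k → ℝ,
          (∀ i, |t i| ≤ (inner ℝ (gramSchmidtONB g i) (g i) : ℝ)) ∧
          x = ∑ i, t i • gramSchmidtONB g i} := by
  classical
  set e : Fin k → EuclideanSpace ℝ (Fin m) := gramSchmidtONB g with he_def
  have honb : Orthonormal ℝ e := gramSchmidtONB_orthonormal g hg
  have htri : ∀ j i : Fin k, i < j → (inner ℝ (e j) (g i) : ℝ) = 0 :=
    fun j i hij => gramSchmidtONB_tri g hg hij
  have hdiag : ∀ i : Fin k, 0 < (inner ℝ (e i) (g i) : ℝ) :=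
    fun i => gramSchmidtONB_diag_pos g hg i
  set T : (Fin k → ℝ) → EuclideanSpace ℝ (Fin m) := fun z => ∑ i, z i • e i with hT
  have hTmeas : Measurable T :=
    (continuous_finset_sum _ fun i _ => (continuous_apply i).smul continuous_const).measurable
  have hZo := zonotope_image_set_measurable g (fun _ => (1:ℝ))
  have hR := zonotope_image_set_measurable e (fun i => (inner ℝ (e i) (g i) : ℝ))
  rw [Measure.map_apply hTmeas hZo, Measure.map_apply hTmeas hR]
  set μ := Measure.pi fun _ : Fin k => gaussianReal 0 (σ ^ 2) with hμ
  have h1 : T ⁻¹' {x | ∃ t : Fin k → ℝ, (∀ i, |t i| ≤ 1) ∧ x = ∑ i, t i • g i} ⊆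
      {z : Fin k → ℝ | ∃ t : Fin k → ℝ, (∀ i, |t i| ≤ 1) ∧
        ∀ j, z j = (fun _ : Fin k => (0:ℝ)) j + ∑ i, t i * (inner ℝ (e j) (g i) : ℝ)} := by
    intro z hz
    simp only [mem_preimage, mem_setOf_eq] at hz ⊢
    obtain ⟨t, ht1, ht2⟩ := hz
    refine ⟨t, ht1, fun j => ?_⟩
    have hzj : z j = (inner ℝ (e j) (T z) : ℝ) := (honb.inner_right_fintype z j).symm
    rw [hzj, ht2, inner_sum]
    simp only [real_inner_smul_right]
    rw [zero_add]
  have h2 := core_ineq hσ k (fun j i => (inner ℝ (e j) (g i) : ℝ)) hdiag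
    (fun j i hij => htri j i hij) (fun _ => 0)
  have h3 : (Set.pi univ fun i : Fin k =>
        Icc (-(inner ℝ (e i) (g i) : ℝ)) ((inner ℝ (e i) (g i) : ℝ))) ⊆
      T ⁻¹' {x | ∃ t : Fin k → ℝ, (∀ i, |t i| ≤ (inner ℝ (e i) (g i) : ℝ)) ∧
        x = ∑ i, t i • e i} := by
    intro z hz
    simp only [mem_preimage, mem_setOf_eq]
    exact ⟨z, fun i => abs_le.2 ⟨(hz i (mem_univ i)).1, (hz i (mem_univ i)).2⟩, rfl⟩
  calc μ (T ⁻¹' {x | ∃ t : Fin k → ℝ, (∀ i, |t i| ≤ 1) ∧ x = ∑ i, t i • g i})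
      ≤ μ {z : Fin k → ℝ | ∃ t : Fin k → ℝ, (∀ i, |t i| ≤ 1) ∧
          ∀ j, z j = (fun _ : Fin k => (0:ℝ)) j + ∑ i, t i * (inner ℝ (e j) (g i) : ℝ)} :=
        measure_mono h1
    _ ≤ ∏ i, gaussianReal 0 (σ ^ 2) (Icc (-(inner ℝ (e i) (g i) : ℝ)) ((inner ℝ (e i) (g i) : ℝ))) :=
        h2
    _ = μ (Set.pi univ fun i : Fin k =>
          Icc (-(inner ℝ (e i) (g i) : ℝ)) ((inner ℝ (e i) (g i) : ℝ))) :=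
        (Measure.pi_pi _ _).symm
    _ ≤ _ := measure_mono h3
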